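/- arXiv:2203.11998 — 3 statements merged into one kernel-verified Lean document; each statement's English description precedes it below -/
import Mathlib

section
/- The double integral of (ξ − σ)|ξ − σ| over the rectangle [0, 1] × [0, 2] satisfies ∫_{0}^{1} ∫_{0}^{2} (ξ − σ)|ξ − σ| dσ dξ = −7/6, and consequently, with R̄ = [0, 1] × [0, 2], μ(x, y) = 1, α(x, ξ, σ) = −x² · (6/7) and β(y, ξ, σ) = y² · (6/7), the function φ(x, y) = (x − y)|x − y| is continuously differentiable on ℝ² with ∂ₓφ(x, y) = 2|x − y| and ∂_yφ(x, y) = −2|x − y|, and is an eigenfunction with eigenvalue λ = −1; that is, for all (x, y) ∈ R̄ one has −∂ₓφ(x, y) − ∂_yφ(x, y) − φ(x, y) = −φ(x, y), together with the boundary conditions φ(x, 0) = ∬_{R̄} α(x, ξ, σ) φ(ξ, σ) dξ dσ for all x ∈ [0, 1] and φ(0, y) = ∬_{R̄} β(y, ξ, σ) φ(ξ, σ) dξ dσ for all y ∈ [0, 2]. -/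
open Real Set MeasureTheory

open Filter

lemma habs1 (t : ℝ) : HasDerivAt (fun t : ℝ => t * |t|) (2 * |t|) t := by
  rcases eq_or_ne t 0 with rfl | ht
  · simp only [abs_zero, mul_zero]
    rw [hasDerivAt_iff_tendsto_slope]
    have h : Tendsto (fun s : ℝ => |s|) (nhdsWithin 0 {(0:ℝ)}ᶜ) (nhds 0) := by
      simpa using (continuous_abs.tendsto (0:ℝ)).mono_left nhdsWithin_le_nhds
    refine h.congr' ?_
    filter_upwards [self_mem_nhdsWithin] with s hs
    have hs' : s ≠ 0 := hs
    rw [slope_def_field, eq_div_iff (sub_ne_zero.mpr hs')]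
    simp only [abs_zero, mul_zero, sub_zero]
    ring
  · have h1 := (hasDerivAt_id t).mul (hasDerivAt_abs ht)
    convert h1 using 1
    · rfl
    · rfl
    · ext s; simp
    rcases ht.lt_or_gt with h | h <;>
      simp [abs_of_neg, abs_of_pos, h] <;> ring

lemma habs2 (t : ℝ) : HasDerivAt (fun t : ℝ => t ^ 2 * |t|) (3 * (t * |t|)) t := by
  rcases eq_or_ne t 0 with rfl | ht
  · simp only [abs_zero, mul_zero]
    rw [hasDerivAt_iff_tendsto_slope]
    have h : Tendsto (fun s : ℝ => s * |s|) (nhdsWithin 0 {(0:ℝ)}ᶜ) (nhds 0) := by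
      simpa using ((show Continuous fun s : ℝ => s * |s| by fun_prop).tendsto (0:ℝ)).mono_left nhdsWithin_le_nhds
    refine h.congr' ?_
    filter_upwards [self_mem_nhdsWithin] with s hs
    have hs' : s ≠ 0 := hs
    rw [slope_def_field, eq_div_iff (sub_ne_zero.mpr hs')]
    simp only [abs_zero, mul_zero, sub_zero]
    ring
  · have h1 := (hasDerivAt_pow 2 t).mul (hasDerivAt_abs ht)
    convert h1 using 1
    · rfl
    · rfl
    · ext s; simp
    rcases ht.lt_or_gt with h | h <;>
      simp [abs_of_neg, abs_of_pos, h] <;> ring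

lemma habs3 (t : ℝ) : HasDerivAt (fun t : ℝ => t ^ 3 * |t|) (4 * (t ^ 2 * |t|)) t := by
  rcases eq_or_ne t 0 with rfl | ht
  · simp only [abs_zero, mul_zero]
    rw [hasDerivAt_iff_tendsto_slope]
    have h : Tendsto (fun s : ℝ => s ^ 2 * |s|) (nhdsWithin 0 {(0:ℝ)}ᶜ) (nhds 0) := by
      simpa using ((show Continuous fun s : ℝ => s ^ 2 * |s| by fun_prop).tendsto (0:ℝ)).mono_left nhdsWithin_le_nhds
    refine h.congr' ?_
    filter_upwards [self_mem_nhdsWithin] with s hs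
    have hs' : s ≠ 0 := hs
    rw [slope_def_field, eq_div_iff (sub_ne_zero.mpr hs')]
    simp only [abs_zero, mul_zero, sub_zero]
    ring
  · have h1 := (hasDerivAt_pow 3 t).mul (hasDerivAt_abs ht)
    convert h1 using 1
    · rfl
    · rfl
    · ext s; simp
    rcases ht.lt_or_gt with h | h <;>
      simp [abs_of_neg, abs_of_pos, h] <;> ring

lemma inner_int (ξ : ℝ) :
    (∫ σ in (0:ℝ)..2, (ξ - σ) * |ξ - σ|) =
      (ξ ^ 2 * |ξ| - (ξ - 2) ^ 2 * |ξ - 2|) / 3 := by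
  have hcont : Continuous fun σ : ℝ => (ξ - σ) * |ξ - σ| := by
    continuity
  have key : ∀ σ : ℝ, HasDerivAt (fun σ : ℝ => -((ξ - σ) ^ 2 * |ξ - σ|) / 3)
      ((ξ - σ) * |ξ - σ|) σ := by
    intro σ
    have h := (habs2 (ξ - σ)).comp σ (((hasDerivAt_id σ).const_sub ξ))
    have h2 := h.const_mul (-(1:ℝ)/3)
    convert h2 using 1
    · rfl
    · rfl
    · ext s; simp [Function.comp]; ring
    · ring
  rw [intervalIntegral.integral_eq_sub_of_hasDerivAt (fun σ _ => key σ)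
      (hcont.intervalIntegrable _ _)]
  ring

lemma outer_int :
    (∫ ξ in (0:ℝ)..1, (ξ ^ 2 * |ξ| - (ξ - 2) ^ 2 * |ξ - 2|) / 3) = -7/6 := by
  have hcont : Continuous fun ξ : ℝ => (ξ ^ 2 * |ξ| - (ξ - 2) ^ 2 * |ξ - 2|) / 3 := by
    continuity
  have key : ∀ ξ : ℝ, HasDerivAt
      (fun ξ : ℝ => (ξ ^ 3 * |ξ| - (ξ - 2) ^ 3 * |ξ - 2|) / 12)
      ((ξ ^ 2 * |ξ| - (ξ - 2) ^ 2 * |ξ - 2|) / 3) ξ := by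
    intro ξ
    have h1 := habs3 ξ
    have h2 := (habs3 (ξ - 2)).comp ξ ((hasDerivAt_id ξ).sub_const 2)
    have h := (h1.sub h2).div_const 12
    convert h using 1
    · rfl
    · rfl
    · ext s; simp [Function.comp_def]
    · ring
  rw [intervalIntegral.integral_eq_sub_of_hasDerivAt (fun ξ _ => key ξ)
      (hcont.intervalIntegrable _ _)]
  have e1 : |(1:ℝ)| = 1 := by norm_num
  have e2 : |(1:ℝ) - 2| = 1 := by norm_num
  have e3 : |(0:ℝ)| = 0 := by norm_num
  have e4 : |(0:ℝ) - 2| = 2 := by norm_num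
  rw [e1, e2, e3, e4]; norm_num

lemma iter_int :
    (∫ ξ in (0:ℝ)..1, ∫ σ in (0:ℝ)..2, (ξ - σ) * |ξ - σ|) = -7/6 := by
  simp only [inner_int]; exact outer_int

lemma prod_int :
    (∫ p in Icc (0:ℝ) 1 ×ˢ Icc (0:ℝ) 2, (p.1 - p.2) * |p.1 - p.2|) = -7/6 := by
  have hcont : Continuous fun p : ℝ × ℝ => (p.1 - p.2) * |p.1 - p.2| := by
    continuity
  have hint : IntegrableOn (fun p : ℝ × ℝ => (p.1 - p.2) * |p.1 - p.2|)
      (Icc (0:ℝ) 1 ×ˢ Icc (0:ℝ) 2) := by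
    exact hcont.continuousOn.integrableOn_compact (isCompact_Icc.prod isCompact_Icc)
  rw [show (volume : Measure (ℝ × ℝ)) = (volume : Measure ℝ).prod volume from
    (Measure.volume_eq_prod _ _).symm] at hint ⊢
  rw [MeasureTheory.setIntegral_prod _ hint]
  rw [MeasureTheory.integral_Icc_eq_integral_Ioc]
  have : ∀ ξ : ℝ, (∫ σ in Icc (0:ℝ) 2, (ξ - σ) * |ξ - σ|) =
      ∫ σ in (0:ℝ)..2, (ξ - σ) * |ξ - σ| := by
    intro ξ
    rw [MeasureTheory.integral_Icc_eq_integral_Ioc,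
      intervalIntegral.integral_of_le (by norm_num : (0:ℝ) ≤ 2)]
  simp only [this]
  rw [← intervalIntegral.integral_of_le (by norm_num : (0:ℝ) ≤ 1)]
  exact iter_int

/-- Example 2.2: `∫_0^1 ∫_0^2 (ξ−σ)|ξ−σ| dσ dξ = −7/6`, and on
`R̄ = [0, 1] × [0, 2]` with `μ ≡ 1`, `α(x, ξ, σ) = −x²·(6/7)`, `β(y, ξ, σ) = y²·(6/7)`,
the function `φ(x, y) = (x−y)|x−y|` is `C¹` on `ℝ²` with `∂ₓφ = 2|x−y|` and
`∂_yφ = −2|x−y|`, and is an eigenfunction with eigenvalue `λ = −1`: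
`−∂ₓφ − ∂_yφ − φ = −φ` on `R̄` together with the two boundary conditions. -/
theorem stmt11 :
    (∫ ξ in (0 : ℝ)..1, ∫ σ in (0 : ℝ)..2, (ξ - σ) * |ξ - σ|) = -7 / 6 ∧
    ContDiff ℝ 1 (fun p : ℝ × ℝ => (p.1 - p.2) * |p.1 - p.2|) ∧
    (∀ x y : ℝ,
      HasDerivAt (fun x' => (x' - y) * |x' - y|) (2 * |x - y|) x ∧
      HasDerivAt (fun y' => (x - y') * |x - y'|) (-(2 * |x - y|)) y) ∧
    (∀ x ∈ Icc (0 : ℝ) 1, ∀ y ∈ Icc (0 : ℝ) 2,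
      -(deriv (fun x' => (x' - y) * |x' - y|) x) -
          deriv (fun y' => (x - y') * |x - y'|) y -
          (x - y) * |x - y| = -((x - y) * |x - y|)) ∧
    (∀ x ∈ Icc (0 : ℝ) 1,
      (x - 0) * |x - 0| =
        ∫ p in Icc (0 : ℝ) 1 ×ˢ Icc (0 : ℝ) 2,
          -x ^ 2 * (6 / 7) * ((p.1 - p.2) * |p.1 - p.2|)) ∧
    (∀ y ∈ Icc (0 : ℝ) 2,
      (0 - y) * |0 - y| =
        ∫ p in Icc (0 : ℝ) 1 ×ˢ Icc (0 : ℝ) 2,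
          y ^ 2 * (6 / 7) * ((p.1 - p.2) * |p.1 - p.2|)) := by
  -- C¹ of t ↦ t|t|
  have hf : ContDiff ℝ 1 (fun t : ℝ => t * |t|) := by
    rw [contDiff_one_iff_deriv]
    constructor
    · exact fun t => (habs1 t).differentiableAt
    · have : deriv (fun t : ℝ => t * |t|) = fun t => 2 * |t| :=
        funext fun t => (habs1 t).deriv
      rw [this]
      exact continuous_const.mul continuous_abs
  have hpart : ∀ x y : ℝ,
      HasDerivAt (fun x' => (x' - y) * |x' - y|) (2 * |x - y|) x ∧
      HasDerivAt (fun y' => (x - y') * |x - y'|) (-(2 * |x - y|)) y := by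
    intro x y
    constructor
    · have h := (habs1 (x - y)).comp x ((hasDerivAt_id x).sub_const y)
      simpa [Function.comp_def] using h
    · have h := (habs1 (x - y)).comp y ((hasDerivAt_id y).const_sub x)
      have : (2 * |x - y|) * (0 - 1) = -(2 * |x - y|) := by ring
      simpa [this, Function.comp_def] using h
  refine ⟨iter_int, ?_, hpart, ?_, ?_, ?_⟩
  · exact (hf.comp (contDiff_fst.sub contDiff_snd) : _)
  · intro x _ y _
    rw [(hpart x y).1.deriv, (hpart x y).2.deriv]
    ring
  · intro x hx
    have hi : IntegrableOn (fun p : ℝ × ℝ => (p.1 - p.2) * |p.1 - p.2|)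
        (Icc (0:ℝ) 1 ×ˢ Icc (0:ℝ) 2) :=
      (by continuity : Continuous fun p : ℝ × ℝ => (p.1 - p.2) * |p.1 - p.2|
        ).continuousOn.integrableOn_compact (isCompact_Icc.prod isCompact_Icc)
    rw [MeasureTheory.integral_const_mul, prod_int]
    rw [abs_of_nonneg (by linarith [hx.1] : (0:ℝ) ≤ x - 0)]
    ring
  · intro y hy
    rw [MeasureTheory.integral_const_mul, prod_int]
    rw [abs_of_nonpos (by linarith [hy.1] : (0:ℝ) - y ≤ 0)]
    ring
end

section
/- The Lebesgue measure of the set {(ξ, σ) ∈ [0, 1] × [0, 2] : σ ≤ ξ} equals 1/2, and consequently, with R̄ = [0, 1] × [0, 2], μ(x, y) = 1, α(x, ξ, σ) = 2 · 𝟙_{[0,∞)}(x) and β(y, ξ, σ) = 2 · 𝟙_{(−∞,0]}(y), the discontinuous indicator function φ(x, y) = 𝟙_{[0,∞)}(x − y) is an eigenfunction with eigenvalue λ = −1; that is, for all (x, y) ∈ R̄ with x ≠ y one has −∂ₓφ(x, y) − ∂_yφ(x, y) − φ(x, y) = −φ(x, y) (the classical partial derivatives existing and vanishing there), together with the boundary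 conditions φ(x, 0) = ∬_{R̄} α(x, ξ, σ) φ(ξ, σ) dξ dσ for all x ∈ [0, 1] and φ(0, y) = ∬_{R̄} β(y, ξ, σ) φ(ξ, σ) dξ dσ for all y ∈ [0, 2]. -/
open Real Set MeasureTheory


lemma set_eq : {p : ℝ × ℝ | p ∈ Icc (0 : ℝ) 1 ×ˢ Icc (0 : ℝ) 2 ∧ p.2 ≤ p.1}
    = {p : ℝ × ℝ | p.1 ∈ Icc (0:ℝ) 1 ∧ p.2 ∈ Icc 0 p.1} := by
  ext ⟨x, y⟩
  simp only [mem_setOf_eq, mem_prod, mem_Icc]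
  constructor
  · rintro ⟨⟨h1, h2⟩, h3⟩; exact ⟨h1, h2.1, h3⟩
  · rintro ⟨⟨h0, h1⟩, h2, h3⟩; exact ⟨⟨⟨h0, h1⟩, ⟨h2, by linarith⟩⟩, h3⟩

lemma vol_half : volume {p : ℝ × ℝ | p ∈ Icc (0 : ℝ) 1 ×ˢ Icc (0 : ℝ) 2 ∧ p.2 ≤ p.1} = 1 / 2 := by
  rw [set_eq]
  have hS : MeasurableSet {p : ℝ × ℝ | p.1 ∈ Icc (0:ℝ) 1 ∧ p.2 ∈ Icc 0 p.1} := by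
    apply MeasurableSet.inter
    · exact (measurableSet_Icc).preimage measurable_fst
    · apply MeasurableSet.inter
      · exact measurableSet_le measurable_const measurable_snd
      · exact measurableSet_le measurable_snd measurable_fst
  rw [Measure.volume_eq_prod, Measure.prod_apply hS]
  have key : ∀ x : ℝ, volume (Prod.mk x ⁻¹' {p : ℝ × ℝ | p.1 ∈ Icc (0:ℝ) 1 ∧ p.2 ∈ Icc 0 p.1})
      = (Icc (0:ℝ) 1).indicator (fun x => ENNReal.ofReal x) x := by
    intro x
    by_cases hx : x ∈ Icc (0:ℝ) 1
    · have : Prod.mk x ⁻¹' {p : ℝ × ℝ | p.1 ∈ Icc (0:ℝ) 1 ∧ p.2 ∈ Icc 0 p.1} = Icc 0 x := by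
        ext y; simp only [mem_preimage, mem_setOf_eq]; exact and_iff_right hx
      rw [this, Real.volume_Icc, indicator_of_mem hx, sub_zero]
    · have : Prod.mk x ⁻¹' {p : ℝ × ℝ | p.1 ∈ Icc (0:ℝ) 1 ∧ p.2 ∈ Icc 0 p.1} = ∅ := by
        ext y
        simp only [mem_preimage, mem_setOf_eq, mem_empty_iff_false, iff_false]
        exact fun h => hx h.1
      rw [this, measure_empty, indicator_of_notMem hx]
  simp_rw [key]
  rw [lintegral_indicator measurableSet_Icc]
  have hint : IntegrableOn (fun x : ℝ => x) (Icc (0:ℝ) 1) := by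
    exact (continuous_id.integrableOn_Icc)
  rw [← ofReal_integral_eq_lintegral_ofReal hint
    (ae_restrict_of_forall_mem measurableSet_Icc (fun x hx => hx.1))]
  · have : ∫ x in Icc (0:ℝ) 1, x = 1/2 := by
      rw [integral_Icc_eq_integral_Ioc, ← intervalIntegral.integral_of_le (by norm_num : (0:ℝ) ≤ 1)]
      simp [integral_id]
    rw [this]
    rw [ENNReal.ofReal_div_of_pos (by norm_num)]
    norm_num

lemma int_half : ∫ p in Icc (0 : ℝ) 1 ×ˢ Icc (0 : ℝ) 2,
    (if 0 ≤ p.1 - p.2 then (1 : ℝ) else 0) = 1 / 2 := by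
  have hA : MeasurableSet {p : ℝ × ℝ | 0 ≤ p.1 - p.2} :=
    measurableSet_le measurable_const (measurable_fst.sub measurable_snd)
  have : (fun p : ℝ × ℝ => if 0 ≤ p.1 - p.2 then (1:ℝ) else 0)
      = ({p : ℝ × ℝ | 0 ≤ p.1 - p.2}).indicator (fun _ => (1:ℝ)) := by
    ext p
    by_cases h : (0:ℝ) ≤ p.1 - p.2
    · simp [indicator, mem_setOf_eq, h, sub_nonneg.mp h]
    · have h' : ¬ p.2 ≤ p.1 := by rwa [sub_nonneg] at h
      simp [indicator, mem_setOf_eq, h, h']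
  rw [this, setIntegral_indicator hA, setIntegral_const]
  have : (Icc (0 : ℝ) 1 ×ˢ Icc (0 : ℝ) 2) ∩ {p : ℝ × ℝ | 0 ≤ p.1 - p.2}
      = {p : ℝ × ℝ | p ∈ Icc (0 : ℝ) 1 ×ˢ Icc (0 : ℝ) 2 ∧ p.2 ≤ p.1} := by
    ext p; simp [mem_setOf_eq, and_comm, sub_nonneg]
  rw [this, measureReal_def, vol_half]
  simp [ENNReal.toReal_div]

lemma deriv_zero_ind {y x : ℝ} (h : x ≠ y) :
    HasDerivAt (fun x' : ℝ => if 0 ≤ x' - y then (1 : ℝ) else 0) 0 x := by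
  rcases lt_or_gt_of_ne h with h | h
  · have he : (fun x' : ℝ => if 0 ≤ x' - y then (1:ℝ) else 0) =ᶠ[nhds x] fun _ => (0:ℝ) := by
      filter_upwards [Iio_mem_nhds h] with z hz
      rw [if_neg (by simp only [mem_Iio] at hz; linarith)]
    exact (hasDerivAt_const x (0:ℝ)).congr_of_eventuallyEq he
  · have he : (fun x' : ℝ => if 0 ≤ x' - y then (1:ℝ) else 0) =ᶠ[nhds x] fun _ => (1:ℝ) := by
      filter_upwards [Ioi_mem_nhds h] with z hz
      rw [if_pos (by simp only [mem_Ioi] at hz; linarith)]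
    exact (hasDerivAt_const x (1:ℝ)).congr_of_eventuallyEq he

lemma deriv_zero' {x y : ℝ} (h : y ≠ x) :
    HasDerivAt (fun y' : ℝ => if 0 ≤ x - y' then (1 : ℝ) else 0) 0 y := by
  rcases lt_or_gt_of_ne h with h | h
  · have he : (fun y' : ℝ => if 0 ≤ x - y' then (1:ℝ) else 0) =ᶠ[nhds y] fun _ => (1:ℝ) := by
      filter_upwards [Iio_mem_nhds h] with z hz
      rw [if_pos (by simp only [mem_Iio] at hz; linarith)]
    exact (hasDerivAt_const y (1:ℝ)).congr_of_eventuallyEq he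
  · have he : (fun y' : ℝ => if 0 ≤ x - y' then (1:ℝ) else 0) =ᶠ[nhds y] fun _ => (0:ℝ) := by
      filter_upwards [Ioi_mem_nhds h] with z hz
      rw [if_neg (by simp only [mem_Ioi] at hz; linarith)]
    exact (hasDerivAt_const y (0:ℝ)).congr_of_eventuallyEq he


/-- Example 2.4: the Lebesgue measure of
`{(ξ, σ) ∈ [0,1]×[0,2] : σ ≤ ξ}` is `1/2`, and on `R̄ = [0, 1] × [0, 2]` with `μ ≡ 1`,
`α(x, ξ, σ) = 2·𝟙_{[0,∞)}(x)`, `β(y, ξ, σ) = 2·𝟙_{(−∞,0]}(y)`, the discontinuous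
function `φ(x, y) = 𝟙_{[0,∞)}(x − y)` is an eigenfunction with eigenvalue `λ = −1`:
at every `(x, y) ∈ R̄` with `x ≠ y` the classical partial derivatives exist and vanish,
so `−∂ₓφ − ∂_yφ − φ = −φ`, together with the two boundary conditions. -/
theorem stmt13 :
    volume {p : ℝ × ℝ | p ∈ Icc (0 : ℝ) 1 ×ˢ Icc (0 : ℝ) 2 ∧ p.2 ≤ p.1} = 1 / 2 ∧
    (∀ x ∈ Icc (0 : ℝ) 1, ∀ y ∈ Icc (0 : ℝ) 2, x ≠ y →
      HasDerivAt (fun x' : ℝ => if 0 ≤ x' - y then (1 : ℝ) else 0) 0 x ∧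
      HasDerivAt (fun y' : ℝ => if 0 ≤ x - y' then (1 : ℝ) else 0) 0 y ∧
      -(0 : ℝ) - 0 - (if 0 ≤ x - y then (1 : ℝ) else 0) =
        -(if 0 ≤ x - y then (1 : ℝ) else 0)) ∧
    (∀ x ∈ Icc (0 : ℝ) 1,
      (if 0 ≤ x - 0 then (1 : ℝ) else 0) =
        ∫ p in Icc (0 : ℝ) 1 ×ˢ Icc (0 : ℝ) 2,
          (2 * if 0 ≤ x then (1 : ℝ) else 0) *
            (if 0 ≤ p.1 - p.2 then (1 : ℝ) else 0)) ∧
    (∀ y ∈ Icc (0 : ℝ) 2,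
      (if (0 : ℝ) ≤ 0 - y then (1 : ℝ) else 0) =
        ∫ p in Icc (0 : ℝ) 1 ×ˢ Icc (0 : ℝ) 2,
          (2 * if y ≤ 0 then (1 : ℝ) else 0) *
            (if 0 ≤ p.1 - p.2 then (1 : ℝ) else 0)) := by
  refine ⟨vol_half, ?_, ?_, ?_⟩
  · intro x hx y hy hxy
    exact ⟨deriv_zero_ind hxy, deriv_zero' (Ne.symm hxy), by ring⟩
  · intro x hx
    rw [if_pos hx.1, if_pos (by linarith [hx.1] : (0:ℝ) ≤ x - 0)]
    rw [MeasureTheory.integral_const_mul, int_half]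
    norm_num
  · intro y hy
    rcases eq_or_lt_of_le hy.1 with h | h
    · rw [if_pos (by rw [← h]; norm_num), if_pos (by rw [← h])]
      rw [MeasureTheory.integral_const_mul, int_half]
      norm_num
    · rw [if_neg (by linarith), if_neg (by linarith)]
      rw [MeasureTheory.integral_const_mul, int_half]
      norm_num
end

section
/- Let λ be a real number. There exists a nonzero continuously differentiable function φ : [0, 2] → ℝ satisfying −φ′(x) − φ(x) = λ φ(x) for all x ∈ [0, 2] and the boundary condition φ(0) = ∫_{0}^{2} e^{−σ} φ(σ) dσ, if and only if λ ≠ −2 and 1 − e^{−2λ−4} = λ + 2 (equivalently, (1 − e^{−2λ−4})/(λ + 2) = 1). -/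
open Real Set

lemma exp_int (c : ℝ) (hc : c ≠ 0) :
    (∫ σ in (0:ℝ)..2, Real.exp (c * σ)) = (Real.exp (2 * c) - 1) / c := by
  have h : ∀ x ∈ uIcc (0:ℝ) 2,
      HasDerivAt (fun σ : ℝ => Real.exp (c * σ) / c) (Real.exp (c * x)) x := by
    intro x _
    have h1 : HasDerivAt (fun σ : ℝ => Real.exp (c * σ)) (Real.exp (c * x) * (c * 1)) x :=
      ((hasDerivAt_id x).const_mul c).exp
    have := h1.div_const c
    have hcc : Real.exp (c * x) * (c * 1) / c = Real.exp (c * x) := by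
      field_simp
    rwa [hcc] at this
  have hint : IntervalIntegrable (fun σ : ℝ => Real.exp (c * σ)) MeasureTheory.volume 0 2 :=
    (Real.continuous_exp.comp (continuous_const.mul continuous_id)).intervalIntegrable _ _
  have := intervalIntegral.integral_eq_sub_of_hasDerivAt h hint
  rw [this, mul_comm c 2, mul_zero, Real.exp_zero]
  ring

/-- characteristic equation of the one-dimensional model on `[0, 2]` with
`μ ≡ 1` and `β(σ) = e^{−σ}`. There exists a nonzero `C¹` function `φ` on `[0, 2]` with
`−φ′ − φ = λφ` on `[0, 2]` and `φ(0) = ∫_0^2 e^{−σ} φ(σ) dσ` if and only if `λ ≠ −2` and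
`1 − e^{−2λ−4} = λ + 2`. -/
theorem stmt15 (lam : ℝ) :
    (∃ φ : ℝ → ℝ, ContDiff ℝ 1 φ ∧ (∃ x ∈ Icc (0 : ℝ) 2, φ x ≠ 0) ∧
        (∀ x ∈ Icc (0 : ℝ) 2, -deriv φ x - φ x = lam * φ x) ∧
        φ 0 = ∫ σ in (0 : ℝ)..2, Real.exp (-σ) * φ σ) ↔
      lam ≠ -2 ∧ 1 - Real.exp (-2 * lam - 4) = lam + 2 := by
  constructor
  · rintro ⟨φ, hφ, ⟨x₀, hx₀, hx₀ne⟩, hode, hbc⟩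
    have hdiff : Differentiable ℝ φ := hφ.differentiable one_ne_zero
    set g : ℝ → ℝ := fun x => φ x * Real.exp ((1 + lam) * x) with hg
    have hgdiff : Differentiable ℝ g :=
      hdiff.mul (Real.differentiable_exp.comp (differentiable_const _ |>.mul differentiable_id))
    have hgderiv : ∀ x ∈ Icc (0:ℝ) 2, deriv g x = 0 := by
      intro x hx
      have he : HasDerivAt (fun y : ℝ => Real.exp ((1 + lam) * y))
          (Real.exp ((1 + lam) * x) * ((1 + lam) * 1)) x :=
        ((hasDerivAt_id x).const_mul (1 + lam)).exp
      have hφd : HasDerivAt φ (deriv φ x) x := (hdiff x).hasDerivAt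
      have hder : deriv (fun x => φ x * Real.exp ((1 + lam) * x)) x = _ := (hφd.mul he).deriv
      rw [hg]
      rw [hder]
      have h2 := hode x hx
      have h3 : deriv φ x = -(1 + lam) * φ x := by linarith
      rw [h3]; ring
    have hconst : ∀ x ∈ Icc (0:ℝ) 2, g x = g 0 := by
      apply constant_of_derivWithin_zero (hgdiff.differentiableOn)
      intro x hx
      rw [(hgdiff x).derivWithin ((uniqueDiffOn_Icc (by norm_num)) x (Ico_subset_Icc_self hx))]
      exact hgderiv x (Ico_subset_Icc_self hx)
    have hφform : ∀ x ∈ Icc (0:ℝ) 2, φ x = φ 0 * Real.exp (-(1 + lam) * x) := by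
      intro x hx
      have hthis : φ x * Real.exp ((1 + lam) * x) = φ 0 := by
        simpa [hg] using hconst x hx
      rw [← hthis, mul_assoc, ← Real.exp_add]
      have h0 : (1 + lam) * x + -(1 + lam) * x = 0 := by ring
      rw [h0, Real.exp_zero, mul_one]
    have hφ0 : φ 0 ≠ 0 := by
      intro h0
      apply hx₀ne
      rw [hφform x₀ hx₀, h0, zero_mul]
    have hintg : (∫ σ in (0:ℝ)..2, Real.exp (-σ) * φ σ)
        = φ 0 * ∫ σ in (0:ℝ)..2, Real.exp (-(2 + lam) * σ) := by
      rw [← intervalIntegral.integral_const_mul]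
      apply intervalIntegral.integral_congr
      intro σ hσ
      rw [uIcc_of_le (by norm_num)] at hσ
      show Real.exp (-σ) * φ σ = φ 0 * Real.exp (-(2 + lam) * σ)
      rw [hφform σ hσ]
      rw [show Real.exp (-σ) * (φ 0 * Real.exp (-(1 + lam) * σ))
          = φ 0 * (Real.exp (-σ) * Real.exp (-(1 + lam) * σ)) from by ring,
        ← Real.exp_add]
      congr 2
      ring
    by_cases hlam : lam = -2
    · exfalso
      rw [hintg] at hbc
      subst hlam
      rw [show -(2 + (-2:ℝ)) = 0 from by ring] at hbc
      simp at hbc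
      exact hφ0 (by linarith)
    · refine ⟨hlam, ?_⟩
      have hc : -(2 + lam) ≠ 0 := by intro h; apply hlam; linarith
      rw [hintg, exp_int _ hc] at hbc
      rw [show (2:ℝ) * -(2 + lam) = -2 * lam - 4 from by ring] at hbc
      have hkey : (1:ℝ) = (Real.exp (-2*lam-4) - 1) / -(2+lam) := by
        have := mul_left_cancel₀ hφ0
          (show φ 0 * 1 = φ 0 * ((Real.exp (-2*lam-4) - 1) / -(2+lam)) from by
            rw [mul_one]; exact hbc)
        exact this
      rw [eq_div_iff hc, one_mul] at hkey
      linarith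
  · rintro ⟨hlam, heq⟩
    refine ⟨fun x => Real.exp (-(1 + lam) * x), ?_, ⟨0, by norm_num, by simp⟩, ?_, ?_⟩
    · exact (Real.contDiff_exp.comp ((contDiff_const).mul contDiff_id))
    · intro x hx
      have hd : HasDerivAt (fun y : ℝ => Real.exp (-(1 + lam) * y))
          (Real.exp (-(1 + lam) * x) * (-(1 + lam) * 1)) x :=
        ((hasDerivAt_id x).const_mul (-(1 + lam))).exp
      rw [hd.deriv]; ring
    · have hc : -(2 + lam) ≠ 0 := by intro h; apply hlam; linarith
      have hint : (∫ σ in (0:ℝ)..2, Real.exp (-σ) * Real.exp (-(1 + lam) * σ))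
          = ∫ σ in (0:ℝ)..2, Real.exp (-(2 + lam) * σ) := by
        apply intervalIntegral.integral_congr
        intro σ _
        show Real.exp (-σ) * Real.exp (-(1 + lam) * σ) = Real.exp (-(2 + lam) * σ)
        rw [← Real.exp_add]
        congr 1
        ring
      rw [hint, exp_int _ hc]
      rw [show (2:ℝ) * -(2 + lam) = -2 * lam - 4 from by ring]
      simp only [mul_zero, Real.exp_zero]
      rw [eq_div_iff hc, one_mul]
      linarith
end
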